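/- Fix x̄ ∈ ℝ, ε > 0 and λ > 0, and let X = (−∞, x̄] × [0,∞) ⊆ ℝ². Let ≽ be a complete and transitive binary relation on X satisfying: (1) ≽ is continuous (upper and lower contour sets are closed in X) and strictly monotone: if x ≥ x', t ≤ t' and (x,t) ≠ (x',t'), then (x,t) ≻ (x',t'); (2) for every (x,t) ∈ X there exists x' ≤ x̄ with (x,t) ≽ (x',0); (3) for every x ≤ x̄ there exists t̄ ≥ 0 such that (x,0) ≻ (x̄,t) for all t ≥ t̄; (4) ε-Stationarity: if (x̄,t) ∼ (x,0) then for every Δ > 0 there exists Δ' with t+Δ' ≥ 0 and |Δ − Δ'| ≤ ε such that (x̄, t+Δ') ∼ (x, Δ); (5) λ-Lipschitz: if (x,t) ∼ (y,0) then for every Δ ≥ 0 there exists Δ' with |Δ'| ≤ λΔ and y+Δ' ≤ x̄ such that (x, t+Δ) ∼ (y+Δ', 0). Then ≽ admits a continuous utility representation u : X → ℝ (so (x,t) ≽ (x',t') iff u(x,t) ≥ u(x',t')) and there is a continuous, strictly decreasing bijection γ : (−∞, x̄] → [0,∞) with γ(x̄) = 0, sup{γ(x) : x < x̄} = +∞,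 u(x̄,0) = x̄, inf{u(x̄,t) : t ≥ 0} = −∞, such that |u(x,t) − γ⁻¹(γ(x) + t)| ≤ λ·ε for all (x,t) ∈ (−∞, x̄) × [0,∞), where γ⁻¹ : [0,∞) → (−∞, x̄] is the inverse of γ. -/
import Mathlib


/-- Theorem `thm:exp3`: a continuous, strictly monotone preference on
`X = (-∞, x̄] × [0,∞)` satisfying the present-value axiom, the depreciation axiom,
ε-Stationarity and λ-Lipschitz admits a continuous utility representation `u` and a
continuous strictly decreasing bijection `γ : (-∞, x̄] → [0,∞)` with `γ x̄ = 0`,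
`sup γ = +∞` on `(-∞, x̄)`, `u (x̄, 0) = x̄`, `inf_t u (x̄, t) = -∞`, and
`|u (x, t) - γ⁻¹(γ x + t)| ≤ λ·ε` on `(-∞, x̄) × [0,∞)`. -/
theorem stmt_19 (xbar ε lam : ℝ) (hε : 0 < ε) (hlam : 0 < lam)
    (R : ℝ × ℝ → ℝ × ℝ → Prop)
    (X : Set (ℝ × ℝ)) (hX : X = Set.Iic xbar ×ˢ Set.Ici (0 : ℝ))
    (hcomp : ∀ z ∈ X, ∀ w ∈ X, R z w ∨ R w z)
    (htrans : ∀ z ∈ X, ∀ w ∈ X, ∀ v ∈ X, R z w → R w v → R z v)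
    (hcont : ∀ w ∈ X, IsClosed {z | z ∈ X ∧ R z w} ∧ IsClosed {z | z ∈ X ∧ R w z})
    (hmono : ∀ z ∈ X, ∀ w ∈ X, w.1 ≤ z.1 → z.2 ≤ w.2 → z ≠ w → R z w ∧ ¬ R w z)
    -- (2) every dated reward has a present value
    (hnpv : ∀ z ∈ X, ∃ x' : ℝ, x' ≤ xbar ∧ R z (x', 0))
    -- (3) delays can discount the maximal payment below any present payment
    (hdeprec : ∀ x : ℝ, x ≤ xbar → ∃ tbar : ℝ, 0 ≤ tbar ∧ ∀ t : ℝ, tbar ≤ t →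
      R (x, 0) (xbar, t) ∧ ¬ R (xbar, t) (x, 0))
    -- (4) ε-Stationarity
    (hstat : ∀ x : ℝ, x ≤ xbar → ∀ t : ℝ, 0 ≤ t →
      (R (xbar, t) (x, 0) ∧ R (x, 0) (xbar, t)) →
      ∀ Δ : ℝ, 0 < Δ → ∃ Δ' : ℝ, 0 ≤ t + Δ' ∧ |Δ - Δ'| ≤ ε ∧
        (R (xbar, t + Δ') (x, Δ) ∧ R (x, Δ) (xbar, t + Δ')))
    -- (5) λ-Lipschitz
    (hlip : ∀ x : ℝ, x ≤ xbar → ∀ t : ℝ, 0 ≤ t → ∀ y : ℝ, y ≤ xbar →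
      (R (x, t) (y, 0) ∧ R (y, 0) (x, t)) →
      ∀ Δ : ℝ, 0 ≤ Δ → ∃ Δ' : ℝ, |Δ'| ≤ lam * Δ ∧ y + Δ' ≤ xbar ∧
        (R (x, t + Δ) (y + Δ', 0) ∧ R (y + Δ', 0) (x, t + Δ))) :
    ∃ (u : ℝ × ℝ → ℝ) (γ γinv : ℝ → ℝ),
      ContinuousOn u X ∧
      (∀ z ∈ X, ∀ w ∈ X, (R z w ↔ u w ≤ u z)) ∧
      ContinuousOn γ (Set.Iic xbar) ∧
      StrictAntiOn γ (Set.Iic xbar) ∧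
      Set.BijOn γ (Set.Iic xbar) (Set.Ici 0) ∧
      Set.InvOn γinv γ (Set.Iic xbar) (Set.Ici 0) ∧
      γ xbar = 0 ∧
      (∀ M : ℝ, ∃ x : ℝ, x < xbar ∧ M < γ x) ∧
      u (xbar, 0) = xbar ∧
      (∀ M : ℝ, ∃ t : ℝ, 0 ≤ t ∧ u (xbar, t) < M) ∧
      (∀ x : ℝ, x < xbar → ∀ t : ℝ, 0 ≤ t → |u (x, t) - γinv (γ x + t)| ≤ lam * ε) := by
  classical
  have memX : ∀ a b : ℝ, (a, b) ∈ X ↔ a ≤ xbar ∧ 0 ≤ b := by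
    intro a b; simp [hX]
  have mem : ∀ a b : ℝ, a ≤ xbar → 0 ≤ b → (a, b) ∈ X := fun a b h1 h2 =>
    (memX a b).2 ⟨h1, h2⟩
  have hrefl : ∀ z ∈ X, R z z := fun z hz => (hcomp z hz z hz).elim id id
  -- weak monotonicity
  have wmono : ∀ z ∈ X, ∀ w ∈ X, w.1 ≤ z.1 → z.2 ≤ w.2 → R z w := by
    intro z hz w hw h1 h2
    by_cases hzw : z = w
    · exact hzw ▸ hrefl z hz
    · exact (hmono z hz w hw h1 h2 hzw).1
  have smono : ∀ z ∈ X, ∀ w ∈ X, w.1 ≤ z.1 → z.2 ≤ w.2 → z ≠ w → ¬ R w z := by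
    intro z hz w hw h1 h2 hne; exact (hmono z hz w hw h1 h2 hne).2
  -- present value: existence
  have pv_ex : ∀ z ∈ X, ∃ v : ℝ, v ≤ xbar ∧ R z (v, 0) ∧ R (v, 0) z := by
    intro z hz
    obtain ⟨x', hx', hRx'⟩ := hnpv z hz
    have hf : Continuous (fun v : ℝ => ((v, 0) : ℝ × ℝ)) :=
      continuous_id.prodMk continuous_const
    have hS : IsClosed {v : ℝ | v ≤ xbar ∧ R z (v, 0)} := by
      have : {v : ℝ | v ≤ xbar ∧ R z (v, 0)}
          = (fun v : ℝ => ((v, 0) : ℝ × ℝ)) ⁻¹' {w | w ∈ X ∧ R z w} := by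
        ext v; simp [memX]
      rw [this]; exact ((hcont z hz).2).preimage hf
    have hT : IsClosed {v : ℝ | v ≤ xbar ∧ R (v, 0) z} := by
      have : {v : ℝ | v ≤ xbar ∧ R (v, 0) z}
          = (fun v : ℝ => ((v, 0) : ℝ × ℝ)) ⁻¹' {w | w ∈ X ∧ R w z} := by
        ext v; simp [memX]
      rw [this]; exact ((hcont z hz).1).preimage hf
    have hsub : Set.Iic xbar ⊆ {v : ℝ | v ≤ xbar ∧ R z (v, 0)} ∪ {v : ℝ | v ≤ xbar ∧ R (v, 0) z} := by
      intro v hv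
      rcases hcomp z hz (v, 0) (mem v 0 hv le_rfl) with h | h
      · exact Or.inl ⟨hv, h⟩
      · exact Or.inr ⟨hv, h⟩
    have hzX := (memX z.1 z.2).1 (by simpa using hz)
    have hne1 : (Set.Iic xbar ∩ {v : ℝ | v ≤ xbar ∧ R z (v, 0)}).Nonempty :=
      ⟨x', hx', hx', hRx'⟩
    have hne2 : (Set.Iic xbar ∩ {v : ℝ | v ≤ xbar ∧ R (v, 0) z}).Nonempty := by
      refine ⟨xbar, Set.self_mem_Iic, le_rfl, ?_⟩
      have := wmono (xbar, 0) (mem xbar 0 le_rfl le_rfl) z hz hzX.1 hzX.2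
      simpa using this
    obtain ⟨v, _, ⟨hv1, hv2⟩, ⟨_, hv3⟩⟩ :=
      isPreconnected_closed_iff.1 isPreconnected_Iic _ _ hS hT hsub hne1 hne2
    exact ⟨v, hv1, hv2, hv3⟩
  -- present value: uniqueness
  have pv_uniq : ∀ z ∈ X, ∀ v w : ℝ, v ≤ xbar → w ≤ xbar →
      (R z (v, 0) ∧ R (v, 0) z) → (R z (w, 0) ∧ R (w, 0) z) → v = w := by
    intro z hz v w hv hw ⟨hv1, hv2⟩ ⟨hw1, hw2⟩
    by_contra hne
    rcases lt_or_gt_of_ne hne with h | h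
    · have : R (v, 0) (w, 0) :=
        htrans _ (mem v 0 hv le_rfl) _ hz _ (mem w 0 hw le_rfl) hv2 hw1
      exact smono (w, 0) (mem w 0 hw le_rfl) (v, 0) (mem v 0 hv le_rfl)
        h.le le_rfl (fun e => hne (congrArg Prod.fst e).symm) this
    · have : R (w, 0) (v, 0) :=
        htrans _ (mem w 0 hw le_rfl) _ hz _ (mem v 0 hv le_rfl) hw2 hv1
      exact smono (v, 0) (mem v 0 hv le_rfl) (w, 0) (mem w 0 hw le_rfl)
        h.le le_rfl (fun e => hne (congrArg Prod.fst e)) this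
  -- the utility function
  set u : ℝ × ℝ → ℝ := fun z => if hz : z ∈ X then (pv_ex z hz).choose else 0 with hu_def
  have u_spec : ∀ z ∈ X, u z ≤ xbar ∧ R z (u z, 0) ∧ R (u z, 0) z := by
    intro z hz
    have : u z = (pv_ex z hz).choose := by simp [hu_def, dif_pos hz]
    rw [this]; exact (pv_ex z hz).choose_spec
  have u_eq : ∀ x : ℝ, x ≤ xbar → u (x, 0) = x := by
    intro x hx
    have hm := mem x 0 hx le_rfl
    exact pv_uniq (x, 0) hm (u (x, 0)) x (u_spec _ hm).1 hx
      ⟨(u_spec _ hm).2.1, (u_spec _ hm).2.2⟩ ⟨hrefl _ hm, hrefl _ hm⟩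
  -- representation
  have urep : ∀ z ∈ X, ∀ w ∈ X, (R z w ↔ u w ≤ u z) := by
    intro z hz w hw
    obtain ⟨huz, hz1, hz2⟩ := u_spec z hz
    obtain ⟨huw, hw1, hw2⟩ := u_spec w hw
    have hmz := mem (u z) 0 huz le_rfl
    have hmw := mem (u w) 0 huw le_rfl
    constructor
    · intro hR
      by_contra hle
      push_neg at hle
      have h1 : R (u z, 0) (u w, 0) :=
        htrans _ hmz _ hz _ hmw hz2 (htrans _ hz _ hw _ hmw hR hw1)
      exact smono (u w, 0) hmw (u z, 0) hmz hle.le le_rfl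
        (fun e => hle.ne' (congrArg Prod.fst e)) h1
    · intro hle
      have h1 : R (u z, 0) (u w, 0) := wmono _ hmz _ hmw hle le_rfl
      exact htrans _ hz _ hmz _ hw hz1 (htrans _ hmz _ hmw _ hw h1 hw2)
  have u_ind : ∀ z ∈ X, ∀ w ∈ X, R z w → R w z → u z = u w := by
    intro z hz w hw h1 h2
    exact le_antisymm ((urep w hw z hz).1 h2) ((urep z hz w hw).1 h1)
  -- continuity of u
  have ucont : ContinuousOn u X := by
    intro z0 hz0
    have hz0X := (memX z0.1 z0.2).1 (by simpa using hz0)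
    have huz0 := u_spec z0 hz0
    show Filter.Tendsto u (nhdsWithin z0 X) (nhds (u z0))
    rw [tendsto_order]
    constructor
    · intro a ha
      have haxb : a ≤ xbar := ha.le.trans huz0.1
      have hma := mem a 0 haxb le_rfl
      have hcl : IsClosed {w | w ∈ X ∧ R (a, 0) w} := (hcont (a, 0) hma).2
      have hz0n : z0 ∈ {w | w ∈ X ∧ R (a, 0) w}ᶜ := by
        intro hmem
        have := (urep (a, 0) hma z0 hz0).1 hmem.2
        rw [u_eq a haxb] at this
        exact absurd this (not_le.2 ha)
      have hev : ∀ᶠ z in nhds z0, z ∈ {w | w ∈ X ∧ R (a, 0) w}ᶜ :=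
        hcl.isOpen_compl.eventually_mem hz0n
      filter_upwards [hev.filter_mono nhdsWithin_le_nhds, self_mem_nhdsWithin] with z hzc hzX
      by_contra hle
      push_neg at hle
      have : R (a, 0) z := by
        have := (urep (a, 0) hma z hzX).2
        rw [u_eq a haxb] at this
        exact this hle
      exact hzc ⟨hzX, this⟩
    · intro b hb
      by_cases hbx : b ≤ xbar
      · have hmb := mem b 0 hbx le_rfl
        have hcl : IsClosed {w | w ∈ X ∧ R w (b, 0)} := (hcont (b, 0) hmb).1
        have hz0n : z0 ∈ {w | w ∈ X ∧ R w (b, 0)}ᶜ := by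
          intro hmem
          have := (urep z0 hz0 (b, 0) hmb).1 hmem.2
          rw [u_eq b hbx] at this
          exact absurd this (not_le.2 hb)
        have hev : ∀ᶠ z in nhds z0, z ∈ {w | w ∈ X ∧ R w (b, 0)}ᶜ :=
          hcl.isOpen_compl.eventually_mem hz0n
        filter_upwards [hev.filter_mono nhdsWithin_le_nhds, self_mem_nhdsWithin] with z hzc hzX
        by_contra hle
        push_neg at hle
        have : R z (b, 0) := by
          have := (urep z hzX (b, 0) hmb).2
          rw [u_eq b hbx] at this
          exact this hle
        exact hzc ⟨hzX, this⟩
      · push_neg at hbx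
        filter_upwards [self_mem_nhdsWithin] with z hzX
        exact lt_of_le_of_lt (u_spec z hzX).1 hbx
  -- γ : existence of the indifference delay
  have g_ex : ∀ x : ℝ, x ≤ xbar → ∃ s : ℝ, 0 ≤ s ∧ R (xbar, s) (x, 0) ∧ R (x, 0) (xbar, s) := by
    intro x hx
    have hmx := mem x 0 hx le_rfl
    have hf : Continuous (fun s : ℝ => ((xbar, s) : ℝ × ℝ)) :=
      continuous_const.prodMk continuous_id
    have hA : IsClosed {s : ℝ | 0 ≤ s ∧ R (xbar, s) (x, 0)} := by
      have : {s : ℝ | 0 ≤ s ∧ R (xbar, s) (x, 0)}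
          = (fun s : ℝ => ((xbar, s) : ℝ × ℝ)) ⁻¹' {w | w ∈ X ∧ R w (x, 0)} := by
        ext s; simp [memX]
      rw [this]; exact ((hcont (x, 0) hmx).1).preimage hf
    have hB : IsClosed {s : ℝ | 0 ≤ s ∧ R (x, 0) (xbar, s)} := by
      have : {s : ℝ | 0 ≤ s ∧ R (x, 0) (xbar, s)}
          = (fun s : ℝ => ((xbar, s) : ℝ × ℝ)) ⁻¹' {w | w ∈ X ∧ R (x, 0) w} := by
        ext s; simp [memX]
      rw [this]; exact ((hcont (x, 0) hmx).2).preimage hf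
    have hsub : Set.Ici (0:ℝ) ⊆ {s : ℝ | 0 ≤ s ∧ R (xbar, s) (x, 0)}
        ∪ {s : ℝ | 0 ≤ s ∧ R (x, 0) (xbar, s)} := by
      intro s hs
      rcases hcomp (xbar, s) (mem xbar s le_rfl hs) (x, 0) hmx with h | h
      · exact Or.inl ⟨hs, h⟩
      · exact Or.inr ⟨hs, h⟩
    have hne1 : (Set.Ici (0:ℝ) ∩ {s : ℝ | 0 ≤ s ∧ R (xbar, s) (x, 0)}).Nonempty := by
      refine ⟨0, Set.self_mem_Ici, le_rfl, ?_⟩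
      exact wmono (xbar, 0) (mem xbar 0 le_rfl le_rfl) (x, 0) hmx hx le_rfl
    have hne2 : (Set.Ici (0:ℝ) ∩ {s : ℝ | 0 ≤ s ∧ R (x, 0) (xbar, s)}).Nonempty := by
      obtain ⟨tbar, htbar, hP⟩ := hdeprec x hx
      exact ⟨tbar, htbar, htbar, (hP tbar le_rfl).1⟩
    obtain ⟨s, _, ⟨hs1, hs2⟩, ⟨_, hs3⟩⟩ :=
      isPreconnected_closed_iff.1 isPreconnected_Ici _ _ hA hB hsub hne1 hne2
    exact ⟨s, hs1, hs2, hs3⟩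
  -- uniqueness of the indifference delay
  have g_uniq : ∀ x : ℝ, x ≤ xbar → ∀ s s' : ℝ, 0 ≤ s → 0 ≤ s' →
      (R (xbar, s) (x, 0) ∧ R (x, 0) (xbar, s)) →
      (R (xbar, s') (x, 0) ∧ R (x, 0) (xbar, s')) → s = s' := by
    intro x hx s s' hs hs' ⟨h1, h2⟩ ⟨h3, h4⟩
    by_contra hne
    have hmx := mem x 0 hx le_rfl
    rcases lt_or_gt_of_ne hne with h | h
    · have : R (xbar, s') (xbar, s) :=
        htrans _ (mem xbar s' le_rfl hs') _ hmx _ (mem xbar s le_rfl hs) h3 h2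
      exact smono (xbar, s) (mem xbar s le_rfl hs) (xbar, s') (mem xbar s' le_rfl hs')
        le_rfl h.le (fun e => hne (congrArg Prod.snd e)) this
    · have : R (xbar, s) (xbar, s') :=
        htrans _ (mem xbar s le_rfl hs) _ hmx _ (mem xbar s' le_rfl hs') h1 h4
      exact smono (xbar, s') (mem xbar s' le_rfl hs') (xbar, s) (mem xbar s le_rfl hs)
        le_rfl h.le (fun e => hne (congrArg Prod.snd e).symm) this
  set γ : ℝ → ℝ := fun x => if hx : x ≤ xbar then (g_ex x hx).choose else 0 with hg_def
  have g_spec : ∀ x : ℝ, (hx : x ≤ xbar) → 0 ≤ γ x ∧ R (xbar, γ x) (x, 0) ∧ R (x, 0) (xbar, γ x) := by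
    intro x hx
    have : γ x = (g_ex x hx).choose := by simp [hg_def, dif_pos hx]
    rw [this]; exact (g_ex x hx).choose_spec
  have g_eq : ∀ x : ℝ, x ≤ xbar → ∀ s : ℝ, 0 ≤ s →
      (R (xbar, s) (x, 0) ∧ R (x, 0) (xbar, s)) → γ x = s := by
    intro x hx s hs h
    exact g_uniq x hx (γ x) s (g_spec x hx).1 hs ⟨(g_spec x hx).2.1, (g_spec x hx).2.2⟩ h
  set γinv : ℝ → ℝ := fun t => u (xbar, t) with hginv_def
  -- γinv (γ x) = x
  have ginv_g : ∀ x : ℝ, x ≤ xbar → γinv (γ x) = x := by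
    intro x hx
    obtain ⟨hg0, hg1, hg2⟩ := g_spec x hx
    have h1 : u (xbar, γ x) = u (x, 0) :=
      u_ind (xbar, γ x) (mem xbar (γ x) le_rfl hg0) (x, 0) (mem x 0 hx le_rfl) hg1 hg2
    rw [hginv_def]; simp only []
    rw [h1, u_eq x hx]
  -- γ (γinv t) = t
  have g_ginv : ∀ t : ℝ, 0 ≤ t → γ (γinv t) = t := by
    intro t ht
    have hm := mem xbar t le_rfl ht
    obtain ⟨hu1, hu2, hu3⟩ := u_spec (xbar, t) hm
    exact g_eq (u (xbar, t)) hu1 t ht ⟨hu2, hu3⟩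
  -- strict antitonicity of γ
  have g_anti : StrictAntiOn γ (Set.Iic xbar) := by
    intro x hx y hy hxy
    by_contra hle
    push_neg at hle
    obtain ⟨hgx0, hgx1, hgx2⟩ := g_spec x hx
    obtain ⟨hgy0, hgy1, hgy2⟩ := g_spec y hy
    have h1 : R (xbar, γ x) (xbar, γ y) :=
      wmono _ (mem xbar (γ x) le_rfl hgx0) _ (mem xbar (γ y) le_rfl hgy0) le_rfl hle
    have h2 : R (x, 0) (y, 0) :=
      htrans _ (mem x 0 hx le_rfl) _ (mem xbar (γ x) le_rfl hgx0) _ (mem y 0 hy le_rfl)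
        hgx2 (htrans _ (mem xbar (γ x) le_rfl hgx0) _ (mem xbar (γ y) le_rfl hgy0)
          _ (mem y 0 hy le_rfl) h1 hgy1)
    exact smono (y, 0) (mem y 0 hy le_rfl) (x, 0) (mem x 0 hx le_rfl) hxy.le le_rfl
      (fun e => hxy.ne' (congrArg Prod.fst e)) h2
  -- continuity of γ
  have gcont : ContinuousOn γ (Set.Iic xbar) := by
    intro x0 hx0
    have hx0' : x0 ≤ xbar := hx0
    obtain ⟨hg0, hg1, hg2⟩ := g_spec x0 hx0'
    have hf : Continuous (fun x : ℝ => ((x, 0) : ℝ × ℝ)) :=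
      continuous_id.prodMk continuous_const
    show Filter.Tendsto γ (nhdsWithin x0 (Set.Iic xbar)) (nhds (γ x0))
    rw [tendsto_order]
    constructor
    · intro a ha
      rcases lt_or_ge a 0 with ha0 | ha0
      · filter_upwards [self_mem_nhdsWithin] with x hx
        exact lt_of_lt_of_le ha0 (g_spec x hx).1
      · have hma := mem xbar a le_rfl ha0
        have hcl : IsClosed ((fun x : ℝ => ((x, 0) : ℝ × ℝ)) ⁻¹' {w | w ∈ X ∧ R w (xbar, a)}) :=
          ((hcont (xbar, a) hma).1).preimage hf
        have hx0n : x0 ∉ (fun x : ℝ => ((x, 0) : ℝ × ℝ)) ⁻¹' {w | w ∈ X ∧ R w (xbar, a)} := by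
          intro hmem
          -- R (x0,0) (xbar,a) means γ x0 ≤ a
          have h3 : R (xbar, γ x0) (xbar, a) :=
            htrans _ (mem xbar (γ x0) le_rfl hg0) _ (mem x0 0 hx0' le_rfl) _ hma hg1 hmem.2
          exact smono (xbar, a) hma (xbar, γ x0) (mem xbar (γ x0) le_rfl hg0) le_rfl ha.le
            (fun e => ha.ne (congrArg Prod.snd e)) h3
        have hev : ∀ᶠ x in nhds x0,
            x ∉ (fun x : ℝ => ((x, 0) : ℝ × ℝ)) ⁻¹' {w | w ∈ X ∧ R w (xbar, a)} :=
          hcl.isOpen_compl.eventually_mem hx0n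
        filter_upwards [hev.filter_mono nhdsWithin_le_nhds, self_mem_nhdsWithin] with x hxc hxI
        by_contra hle
        push_neg at hle
        obtain ⟨hgx0, hgx1, hgx2⟩ := g_spec x hxI
        have h4 : R (xbar, γ x) (xbar, a) :=
          wmono _ (mem xbar (γ x) le_rfl hgx0) _ hma le_rfl hle
        have h5 : R (x, 0) (xbar, a) :=
          htrans _ (mem x 0 hxI le_rfl) _ (mem xbar (γ x) le_rfl hgx0) _ hma hgx2 h4
        exact hxc ⟨mem x 0 hxI le_rfl, h5⟩
    · intro b hb
      have hb0 : 0 ≤ b := le_of_lt (lt_of_le_of_lt hg0 hb)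
      have hmb := mem xbar b le_rfl hb0
      have hcl : IsClosed ((fun x : ℝ => ((x, 0) : ℝ × ℝ)) ⁻¹' {w | w ∈ X ∧ R (xbar, b) w}) :=
        ((hcont (xbar, b) hmb).2).preimage hf
      have hx0n : x0 ∉ (fun x : ℝ => ((x, 0) : ℝ × ℝ)) ⁻¹' {w | w ∈ X ∧ R (xbar, b) w} := by
        intro hmem
        have h3 : R (xbar, b) (xbar, γ x0) :=
          htrans _ hmb _ (mem x0 0 hx0' le_rfl) _ (mem xbar (γ x0) le_rfl hg0) hmem.2 hg2
        exact smono (xbar, γ x0) (mem xbar (γ x0) le_rfl hg0) (xbar, b) hmb le_rfl hb.le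
          (fun e => hb.ne (congrArg Prod.snd e)) h3
      have hev : ∀ᶠ x in nhds x0,
          x ∉ (fun x : ℝ => ((x, 0) : ℝ × ℝ)) ⁻¹' {w | w ∈ X ∧ R (xbar, b) w} :=
        hcl.isOpen_compl.eventually_mem hx0n
      filter_upwards [hev.filter_mono nhdsWithin_le_nhds, self_mem_nhdsWithin] with x hxc hxI
      by_contra hle
      push_neg at hle
      obtain ⟨hgx0, hgx1, hgx2⟩ := g_spec x hxI
      have h4 : R (xbar, b) (xbar, γ x) :=
        wmono _ hmb _ (mem xbar (γ x) le_rfl hgx0) le_rfl hle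
      have h5 : R (xbar, b) (x, 0) :=
        htrans _ hmb _ (mem xbar (γ x) le_rfl hgx0) _ (mem x 0 hxI le_rfl) h4 hgx1
      exact hxc ⟨mem x 0 hxI le_rfl, h5⟩
  -- Lipschitz property of γinv
  have lip : ∀ s : ℝ, 0 ≤ s → ∀ d : ℝ, 0 ≤ d →
      |u (xbar, s + d) - u (xbar, s)| ≤ lam * d := by
    intro s hs d hd
    have hms := mem xbar s le_rfl hs
    obtain ⟨hy, hy1, hy2⟩ := u_spec (xbar, s) hms
    obtain ⟨Δ', hΔ1, hΔ2, hΔ3, hΔ4⟩ := hlip xbar le_rfl s hs (u (xbar, s)) hy ⟨hy1, hy2⟩ d hd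
    have hmsd := mem xbar (s + d) le_rfl (by linarith)
    have : u (xbar, s + d) = u (xbar, s) + Δ' :=
      pv_uniq (xbar, s + d) hmsd _ _ (u_spec _ hmsd).1 hΔ2
        ⟨(u_spec _ hmsd).2.1, (u_spec _ hmsd).2.2⟩ ⟨hΔ3, hΔ4⟩
    rw [this]
    simpa using hΔ1
  refine ⟨u, γ, γinv, ucont, urep, gcont, g_anti, ⟨?_, g_anti.injOn, ?_⟩, ⟨?_, ?_⟩,
    ?_, ?_, u_eq xbar le_rfl, ?_, ?_⟩
  · -- MapsTo
    intro x hx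
    exact (g_spec x hx).1
  · -- SurjOn
    intro t ht
    have ht' : (0:ℝ) ≤ t := ht
    have hm := mem xbar t le_rfl ht'
    refine ⟨u (xbar, t), (u_spec _ hm).1, ?_⟩
    exact g_ginv t ht'
  · -- LeftInvOn
    intro x hx; exact ginv_g x hx
  · -- RightInvOn
    intro t ht; exact g_ginv t ht
  · -- γ xbar = 0
    exact g_eq xbar le_rfl 0 le_rfl
      ⟨hrefl _ (mem xbar 0 le_rfl le_rfl), hrefl _ (mem xbar 0 le_rfl le_rfl)⟩
  · -- sup γ = ∞
    intro M
    set t := max M 0 + 1 with htdef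
    have ht0 : (0:ℝ) ≤ t := by positivity
    have htM : M < t := lt_of_le_of_lt (le_max_left M 0) (by linarith)
    have hm := mem xbar t le_rfl ht0
    refine ⟨u (xbar, t), ?_, ?_⟩
    · rcases lt_or_eq_of_le (u_spec _ hm).1 with h | h
      · exact h
      · exfalso
        obtain ⟨_, hu2, hu3⟩ := u_spec (xbar, t) hm
        rw [h] at hu2
        have htpos : (0:ℝ) < t := by positivity
        exact smono (xbar, 0) (mem xbar 0 le_rfl le_rfl) (xbar, t) hm le_rfl ht0
          (fun e => (ne_of_lt htpos) (congrArg Prod.snd e)) hu2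
    · rw [g_ginv t ht0]; exact htM
  · -- inf u (xbar, ·) = -∞
    intro M
    set x := min M xbar - 1 with hxdef
    have hx1 : x ≤ xbar := by
      have := min_le_right M xbar; linarith
    have hx2 : x < M := by
      have := min_le_left M xbar; linarith
    obtain ⟨tbar, htbar, hP⟩ := hdeprec x hx1
    obtain ⟨h1, h2⟩ := hP tbar le_rfl
    refine ⟨tbar, htbar, ?_⟩
    have hm := mem xbar tbar le_rfl htbar
    have hmx := mem x 0 hx1 le_rfl
    have h3 : u (xbar, tbar) ≤ x := by
      have := (urep (x, 0) hmx (xbar, tbar) hm).1 h1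
      rwa [u_eq x hx1] at this
    exact lt_of_le_of_lt h3 hx2
  · -- approximation bound
    intro x hx t ht
    have hx' : x ≤ xbar := hx.le
    rcases eq_or_lt_of_le ht with h0 | h0
    · -- t = 0
      rw [← h0, add_zero, ginv_g x hx']
      have : u (x, 0) = x := u_eq x hx'
      rw [this, sub_self, abs_zero]
      positivity
    · obtain ⟨hg0, hg1, hg2⟩ := g_spec x hx'
      obtain ⟨Δ', hΔ1, hΔ2, hΔ3, hΔ4⟩ := hstat x hx' (γ x) hg0 ⟨hg1, hg2⟩ t h0
      have hmxt := mem x t hx' ht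
      have hmΔ := mem xbar (γ x + Δ') le_rfl hΔ1
      have hut : u (x, t) = u (xbar, γ x + Δ') :=
        (u_ind (x, t) hmxt (xbar, γ x + Δ') hmΔ hΔ4 hΔ3)
      rw [hut]
      have hginvt : γinv (γ x + t) = u (xbar, γ x + t) := rfl
      rw [hginvt]
      rcases le_total Δ' t with hc | hc
      · have key := lip (γ x + Δ') hΔ1 (t - Δ') (by linarith)
        have heq : γ x + Δ' + (t - Δ') = γ x + t := by ring
        rw [heq] at key
        rw [abs_sub_comm]
        calc |u (xbar, γ x + t) - u (xbar, γ x + Δ')| ≤ lam * (t - Δ') := key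
          _ ≤ lam * ε := by
              apply mul_le_mul_of_nonneg_left _ hlam.le
              calc t - Δ' ≤ |t - Δ'| := le_abs_self _
                _ ≤ ε := hΔ2
      · have hgt0 : 0 ≤ γ x + t := by linarith
        have key := lip (γ x + t) hgt0 (Δ' - t) (by linarith)
        have heq : γ x + t + (Δ' - t) = γ x + Δ' := by ring
        rw [heq] at key
        calc |u (xbar, γ x + Δ') - u (xbar, γ x + t)| ≤ lam * (Δ' - t) := key
          _ ≤ lam * ε := by
              apply mul_le_mul_of_nonneg_left _ hlam.le
              calc Δ' - t ≤ |Δ' - t| := le_abs_self _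
                _ ≤ ε := by rw [abs_sub_comm]; exact hΔ2
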